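/- Let G be a finite connected 2d-regular simple graph with an odd number of vertices, where d ≥ 1. Then for every integer k with 1 ≤ k ≤ d and k ≡ d (mod 2), the graph G admits a k-odd decomposition. -/

import Mathlib

open SimpleGraph

/-- An eulerian subgraph of `G`: a connected (hence vertex-nonempty) subgraph of `G`
in which every vertex has even degree. -/
def IsEulerianSubgraph {V : Type*} (G : SimpleGraph V) (H : G.Subgraph) : Prop :=
  H.Connected ∧ ∀ v ∈ H.verts, Even ((H.neighborSet v).ncard)

/-- A `k`-odd decomposition of `G`: a partition of the edge set of `G` into the edge
sets of `k` eulerian subgraphs, each having an odd number of edges. -/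
def IsKOddDecomposition {V : Type*} (G : SimpleGraph V) (k : ℕ)
    (D : Fin k → G.Subgraph) : Prop :=
  (∀ i, IsEulerianSubgraph G (D i)) ∧
  (∀ i, Odd ((D i).edgeSet.ncard)) ∧
  (∀ i j, i ≠ j → Disjoint ((D i).edgeSet) ((D j).edgeSet)) ∧
  (⋃ i, (D i).edgeSet) = G.edgeSet

namespace OddDecompAux

variable {V : Type*}

lemma count_dropLast_add [DecidableEq V] (l : List V) (hne : l ≠ []) (v : V) :
    l.dropLast.count v + (if l.getLast hne = v then 1 else 0) = l.count v := by
  conv_rhs => rw [← List.dropLast_append_getLast hne]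
  rw [List.count_append]
  simp [List.count_cons, List.count_nil]

lemma count_tail_add [DecidableEq V] (l : List V) (hne : l ≠ []) (v : V) :
    l.tail.count v + (if l.head hne = v then 1 else 0) = l.count v := by
  conv_rhs => rw [← List.cons_head_tail hne]
  rw [List.count_cons]
  simp

lemma dart_counts {G : SimpleGraph V} [DecidableEq V] {a b : V} (w : G.Walk a b) (v : V) :
    (w.darts.map (fun d => d.toProd.1)).count v + (if b = v then 1 else 0)
        = w.support.count v
      ∧ (w.darts.map (fun d => d.toProd.2)).count v + (if a = v then 1 else 0)
        = w.support.count v := by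
  rw [Walk.map_fst_darts, Walk.map_snd_darts]
  have h1 := count_dropLast_add w.support w.support_ne_nil v
  have h2 := count_tail_add w.support w.support_ne_nil v
  have hlast : w.support.getLast w.support_ne_nil = b := w.getLast_support
  have hhead : w.support.head w.support_ne_nil = a := w.head_support
  simp only [hlast] at h1
  simp only [hhead] at h2
  exact ⟨h1, h2⟩

lemma closed_dart_counts {G : SimpleGraph V} [DecidableEq V] {a : V} (w : G.Walk a a) (v : V) :
    (w.darts.map (fun d => d.toProd.1)).count v
      = (w.darts.map (fun d => d.toProd.2)).count v := by
  have := dart_counts w v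
  omega

lemma open_dart_counts_odd {G : SimpleGraph V} [DecidableEq V] {a b : V} (w : G.Walk a b)
    (hab : a ≠ b) :
    Odd ((w.darts.map (fun d => d.toProd.1)).count b
      + (w.darts.map (fun d => d.toProd.2)).count b) := by
  obtain ⟨h1, h2⟩ := dart_counts w b
  rw [if_pos rfl] at h1
  rw [if_neg (by exact fun hh => hab hh)] at h2
  have hb : 0 < w.support.count b := List.count_pos_iff.mpr w.end_mem_support
  have hne : ¬ (a = b) := hab
  rw [Nat.odd_iff]
  omega

lemma inc_eq {G : SimpleGraph V} [DecidableEq V] {a b : V} (w : G.Walk a b) (v : V) :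
    (w.edges.filter (fun e => decide (v ∈ e))).length
      = (w.darts.map (fun d => d.toProd.1)).count v
        + (w.darts.map (fun d => d.toProd.2)).count v := by
  induction w with
  | nil => simp
  | @cons a c b h p ih =>
    have hlen : (List.filter (fun e => decide (v ∈ e)) ((Walk.cons h p).edges)).length
        = (if v ∈ s(a,c) then 1 else 0)
          + (List.filter (fun e => decide (v ∈ e)) p.edges).length := by
      rw [Walk.edges_cons, List.filter_cons]
      by_cases hv : v ∈ s(a,c) <;> simp [hv] <;> omega
    rw [hlen, ih]
    simp only [Walk.darts_cons, List.map_cons, List.count_cons, beq_iff_eq]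
    have hiff : v ∈ s(a,c) ↔ (a = v ∨ c = v) := by
      rw [Sym2.mem_iff]
      constructor
      · rintro (rfl|rfl)
        exacts [Or.inl rfl, Or.inr rfl]
      · rintro (rfl|rfl)
        exacts [Or.inl rfl, Or.inr rfl]
    have hmem : (if v ∈ s(a,c) then 1 else 0)
        = (if a = v then 1 else 0) + (if c = v then 1 else 0) := by
      by_cases ha : a = v <;> by_cases hc : c = v
      · exact absurd (ha.trans hc.symm) h.ne
      · simp [hiff, ha, hc]
      · simp [hiff, ha, hc]
      · simp [hiff, ha, hc]
    omega

lemma ncard_incidence {G : SimpleGraph V} [DecidableEq V] {a b : V} (w : G.Walk a b)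
    (hw : w.IsTrail) (u : V) :
    {x | G.Adj u x ∧ s(u, x) ∈ w.edges}.ncard
      = (w.darts.map (fun d => d.toProd.1)).count u
        + (w.darts.map (fun d => d.toProd.2)).count u := by
  classical
  have hinj : Set.InjOn (fun x => s(u, x)) {x | G.Adj u x ∧ s(u, x) ∈ w.edges} := by
    intro x hx y hy hxy
    exact (Sym2.congr_right).mp hxy
  have himg : (fun x => s(u, x)) '' {x | G.Adj u x ∧ s(u, x) ∈ w.edges}
      = ((w.edges.filter (fun e => decide (u ∈ e))).toFinset : Set (Sym2 V)) := by
    ext e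
    simp only [Set.mem_image, Set.mem_setOf_eq, List.coe_toFinset, List.mem_filter,
      decide_eq_true_eq]
    constructor
    · rintro ⟨x, ⟨hadj, hmem⟩, rfl⟩
      exact ⟨hmem, Sym2.mem_mk_left u x⟩
    · rintro ⟨hmem, hu⟩
      obtain ⟨y, rfl⟩ := Sym2.mem_iff_exists.mp hu
      exact ⟨y, ⟨w.adj_of_mem_edges hmem, hmem⟩, rfl⟩
  have := Set.ncard_image_of_injOn hinj
  rw [himg] at this
  rw [← this, Set.ncard_coe_finset,
    List.toFinset_card_of_nodup (hw.edges_nodup.filter _), inc_eq]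

lemma closed_inc_even {G : SimpleGraph V} [DecidableEq V] {a : V} (w : G.Walk a a)
    (hw : w.IsTrail) (u : V) :
    Even ({x | G.Adj u x ∧ s(u, x) ∈ w.edges}.ncard) := by
  rw [ncard_incidence w hw u, closed_dart_counts w u]
  exact ⟨_, rfl⟩

lemma exists_closed_trail {G : SimpleGraph V} [Fintype V] [DecidableEq V]
    (heven : ∀ v, Even ((G.neighborSet v).ncard)) {v0 : V} (h0 : ∃ x, G.Adj v0 x) :
    ∃ w : G.Walk v0 v0, w.IsTrail ∧ w.length ≠ 0 := by
  classical
  set B := G.edgeFinset.card with hB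
  set P : ℕ → Prop := fun n => ∃ u, ∃ w : G.Walk v0 u, w.IsTrail ∧ w.length = n with hP
  have hP0 : P 0 := ⟨v0, Walk.nil, Walk.IsTrail.nil, rfl⟩
  set N := Nat.findGreatest P B with hN
  have hPN : P N := Nat.findGreatest_spec (Nat.zero_le B) hP0
  obtain ⟨u, w, hw, hwlen⟩ := hPN
  have hmax : ∀ {u'} (w' : G.Walk v0 u'), w'.IsTrail → w'.length ≤ N := by
    intro u' w' hw'
    by_contra hgt
    exact Nat.findGreatest_is_greatest (Nat.lt_of_not_le hgt)
      hw'.length_le_card_edgeFinset ⟨u', w', hw', rfl⟩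
  have hN1 : N ≠ 0 := by
    intro hz
    obtain ⟨x, hx⟩ := h0
    have ht : (Walk.cons hx Walk.nil).IsTrail := by simp [Walk.isTrail_def]
    have := hmax _ ht
    rw [hz] at this
    simp at this
  have huv : u = v0 := by
    by_contra hne
    have hodd : Odd ({x | G.Adj u x ∧ s(u, x) ∈ w.edges}.ncard) := by
      rw [ncard_incidence w hw u]
      exact open_dart_counts_odd w (fun h => hne h.symm)
    have hsub : {x | G.Adj u x ∧ s(u,x) ∈ w.edges} ⊆ G.neighborSet u := fun x hx => hx.1
    have hneq : {x | G.Adj u x ∧ s(u,x) ∈ w.edges} ≠ G.neighborSet u := by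
      intro he
      rw [he] at hodd
      exact (Nat.not_odd_iff_even.mpr (heven u)) hodd
    obtain ⟨x, hx, hxn⟩ : ∃ x, G.Adj u x ∧ s(u,x) ∉ w.edges := by
      obtain ⟨x, hx1, hx2⟩ := Set.exists_of_ssubset (hsub.ssubset_of_ne hneq)
      exact ⟨x, hx1, fun hmem => hx2 ⟨hx1, hmem⟩⟩
    have htrail : (w.concat hx).IsTrail := by
      rw [Walk.isTrail_def, Walk.edges_concat, List.concat_eq_append, List.nodup_append]
      refine ⟨hw.edges_nodup, List.nodup_singleton _, ?_⟩
      intro e he1 b he2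
      rw [List.mem_singleton] at he2
      subst he2
      exact fun h => hxn (h ▸ he1)
    have := hmax _ htrail
    rw [Walk.length_concat] at this
    omega
  subst huv
  exact ⟨w, hw, by omega⟩

lemma toFinset_filter_card {α β : Type*} [DecidableEq α] [DecidableEq β] :
    ∀ (l : List α), l.Nodup → ∀ (f : α → β) (v : β),
    (l.toFinset.filter (fun p => f p = v)).card = (l.map f).count v := by
  intro l
  induction l with
  | nil => simp
  | cons a t ih =>
    intro hl f v
    rw [List.nodup_cons] at hl
    rw [List.toFinset_cons, Finset.filter_insert, List.map_cons, List.count_cons]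
    by_cases hfa : f a = v
    · rw [if_pos hfa, Finset.card_insert_of_notMem
        (fun hmem => hl.1 (List.mem_toFinset.mp (Finset.mem_of_mem_filter _ hmem))),
        ih hl.2 f v]
      simp [hfa]
    · rw [if_neg hfa, ih hl.2 f v]
      simp [hfa]

lemma exists_orientation [Fintype V] [DecidableEq V] :
    ∀ (n : ℕ) (G : SimpleGraph V), G.edgeSet.ncard ≤ n →
    (∀ v, Even ((G.neighborSet v).ncard)) →
    ∃ A : Finset (V × V),
      (∀ p ∈ A, G.Adj p.1 p.2) ∧
      (∀ u v, G.Adj u v → ((u,v) ∈ A ↔ (v,u) ∉ A)) ∧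
      (∀ v, (A.filter (fun p => p.1 = v)).card = (A.filter (fun p => p.2 = v)).card) := by
  intro n
  induction n with
  | zero =>
    intro G hle heven
    have hE : G.edgeSet = ∅ := by
      rw [← Set.ncard_eq_zero (Set.toFinite _)]
      omega
    refine ⟨∅, ?_, ?_, ?_⟩
    · intro p hp; simp at hp
    · intro u v huv
      exact absurd (hE ▸ (G.mem_edgeSet.mpr huv)) (Set.notMem_empty _)
    · intro v; rfl
  | succ n ih =>
    intro G hle heven
    by_cases hE : G.edgeSet = ∅
    · refine ⟨∅, ?_, ?_, ?_⟩
      · intro p hp; simp at hp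
      · intro u v huv
        exact absurd (hE ▸ (G.mem_edgeSet.mpr huv)) (Set.notMem_empty _)
      · intro v; rfl
    obtain ⟨e, he⟩ := Set.nonempty_iff_ne_empty.mpr hE
    obtain ⟨a, b, hab⟩ : ∃ a b, G.Adj a b := by
      induction e using Sym2.ind with
      | _ a b => exact ⟨a, b, G.mem_edgeSet.mp he⟩
    obtain ⟨w, hw, hlen⟩ := exists_closed_trail heven ⟨b, hab⟩
    set G' := G.deleteEdges {e | e ∈ w.edges} with hG'
    have hG'adj : ∀ u v, G'.Adj u v ↔ G.Adj u v ∧ s(u,v) ∉ w.edges := by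
      intro u v
      rw [hG', deleteEdges_adj]
      rfl
    have hG'le : G' ≤ G := by
      intro u v huv
      exact ((hG'adj u v).mp huv).1
    have heven' : ∀ v, Even ((G'.neighborSet v).ncard) := by
      intro v
      have hset : G'.neighborSet v
          = G.neighborSet v \ {x | G.Adj v x ∧ s(v,x) ∈ w.edges} := by
        ext x
        simp only [mem_neighborSet, Set.mem_diff, Set.mem_setOf_eq, hG'adj]
        tauto
      have hsub : {x | G.Adj v x ∧ s(v,x) ∈ w.edges} ⊆ G.neighborSet v :=
        fun x hx => hx.1
      rw [hset, Set.ncard_diff hsub (Set.toFinite _)]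
      obtain ⟨p, hp⟩ := heven v
      obtain ⟨q, hq⟩ := closed_inc_even w hw v
      have hle' : {x | G.Adj v x ∧ s(v,x) ∈ w.edges}.ncard ≤ (G.neighborSet v).ncard :=
        Set.ncard_le_ncard hsub (Set.toFinite _)
      exact ⟨p - q, by omega⟩
    have hcard : G'.edgeSet.ncard ≤ n := by
      obtain ⟨e0, he0⟩ : ∃ e0, e0 ∈ w.edges := by
        cases hedges : w.edges with
        | nil =>
          exfalso
          apply hlen
          have := w.length_edges
          rw [hedges] at this
          simpa using this.symm
        | cons x xs => exact ⟨x, by simp [hedges]⟩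
      have hss : G'.edgeSet ⊂ G.edgeSet := by
        constructor
        · exact edgeSet_mono hG'le
        · intro hsup
          have h1 : e0 ∈ G.edgeSet := w.edges_subset_edgeSet he0
          have h2 : e0 ∈ G'.edgeSet := hsup h1
          induction e0 using Sym2.ind with
          | _ x y =>
            have := (hG'adj x y).mp (G'.mem_edgeSet.mp h2)
            exact this.2 he0
      have := Set.ncard_lt_ncard hss (Set.toFinite _)
      omega
    obtain ⟨A', hA'1, hA'2, hA'3⟩ := ih G' hcard heven'
    have hA'notir : ∀ u v, s(u,v) ∈ w.edges → (u,v) ∉ A' := by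
      intro u v hmem hA
      exact ((hG'adj u v).mp (hA'1 _ hA)).2 hmem
    set L : List (V × V) := w.darts.map SimpleGraph.Dart.toProd with hL
    have hnodupmap : (w.darts.map SimpleGraph.Dart.edge).Nodup := hw.edges_nodup
    have hdartsnodup : w.darts.Nodup := hnodupmap.of_map
    have hLnodup : L.Nodup := hdartsnodup.map SimpleGraph.Dart.toProd_injective
    have hmemL : ∀ u v, (u, v) ∈ L → s(u,v) ∈ w.edges := by
      intro u v huv
      rw [hL] at huv
      obtain ⟨d, hd, hdp⟩ := List.mem_map.mp huv
      have : d.edge = s(u,v) := by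
        simp [SimpleGraph.Dart.edge, hdp]
      rw [← this]
      exact List.mem_map_of_mem hd
    have hLone : ∀ u v, s(u,v) ∈ w.edges → ((u,v) ∈ L ↔ (v,u) ∉ L) := by
      intro u v hmem
      have hne : u ≠ v := (w.adj_of_mem_edges hmem).ne
      constructor
      · intro h1 h2
        rw [hL] at h1 h2
        obtain ⟨d1, hd1, hdp1⟩ := List.mem_map.mp h1
        obtain ⟨d2, hd2, hdp2⟩ := List.mem_map.mp h2
        have hedge : d1.edge = d2.edge := by
          simp [SimpleGraph.Dart.edge, hdp1, hdp2, Sym2.eq_swap]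
        have heq : d1 = d2 := List.inj_on_of_nodup_map hnodupmap hd1 hd2 hedge
        rw [heq, hdp2] at hdp1
        have : v = u := congrArg Prod.fst hdp1
        exact hne this.symm
      · intro h2
        have : s(u,v) ∈ w.darts.map SimpleGraph.Dart.edge := hmem
        obtain ⟨d, hd, hdp⟩ := List.mem_map.mp this
        have : d.toProd = (u, v) ∨ d.toProd = (v, u) := by
          have h' : s(d.toProd.1, d.toProd.2) = s(u, v) := hdp
          rw [Sym2.eq_iff] at h'
          rcases h' with ⟨h1, h2⟩ | ⟨h1, h2⟩
          · left; exact Prod.ext h1 h2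
          · right; exact Prod.ext h1 h2
        rcases this with hcase | hcase
        · rw [hL]
          rw [← hcase]
          exact List.mem_map_of_mem hd
        · exfalso
          apply h2
          rw [hL, ← hcase]
          exact List.mem_map_of_mem hd
    have hdisj : Disjoint A' L.toFinset := by
      rw [Finset.disjoint_left]
      intro p hp hpL
      have := hmemL p.1 p.2 (List.mem_toFinset.mp hpL)
      exact hA'notir p.1 p.2 this hp
    refine ⟨A' ∪ L.toFinset, ?_, ?_, ?_⟩
    · intro p hp
      rcases Finset.mem_union.mp hp with h | h
      · exact hG'le (hA'1 p h)
      · obtain ⟨d, hd, hdp⟩ := List.mem_map.mp (List.mem_toFinset.mp h)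
        rw [← hdp]
        exact d.adj
    · intro u v huv
      by_cases hmem : s(u,v) ∈ w.edges
      · have h1 : (u,v) ∉ A' := hA'notir u v hmem
        have h2 : (v,u) ∉ A' := hA'notir v u (by rwa [Sym2.eq_swap])
        have hi := hLone u v hmem
        simp only [Finset.mem_union, List.mem_toFinset]
        tauto
      · have hmem' : s(v,u) ∉ w.edges := by rwa [Sym2.eq_swap]
        have g1 : (u,v) ∉ L.toFinset := by
          intro h
          exact hmem (hmemL u v (List.mem_toFinset.mp h))
        have g2 : (v,u) ∉ L.toFinset := by
          intro h
          exact hmem' (hmemL v u (List.mem_toFinset.mp h))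
        have hadj' : G'.Adj u v := (hG'adj u v).mpr ⟨huv, hmem⟩
        simp only [Finset.mem_union]
        constructor
        · rintro (hc | hc) hd
          · rcases hd with hd | hd
            · exact (hA'2 u v hadj').mp hc hd
            · exact g2 hd
          · exact g1 hc
        · intro hc
          left
          apply (hA'2 u v hadj').mpr
          intro hd
          exact hc (Or.inl hd)
    · intro v
      rw [Finset.filter_union, Finset.filter_union,
        Finset.card_union_of_disjoint (Finset.disjoint_filter_filter hdisj),
        Finset.card_union_of_disjoint (Finset.disjoint_filter_filter hdisj),
        hA'3 v,
        toFinset_filter_card L hLnodup (fun p => p.1) v,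
        toFinset_filter_card L hLnodup (fun p => p.2) v]
      have h1 : L.map (fun p => p.1) = w.darts.map (fun d => d.toProd.1) := by
        rw [hL, List.map_map]; rfl
      have h2 : L.map (fun p => p.2) = w.darts.map (fun d => d.toProd.2) := by
        rw [hL, List.map_map]; rfl
      rw [h1, h2, closed_dart_counts w v]

section Matching
variable [Fintype V] [DecidableEq V]

lemma card_filter_coord (A : Finset (V × V)) (f : V × V → V) (B : Finset V) :
    (A.filter (fun p => f p ∈ B)).card = ∑ v ∈ B, (A.filter (fun p => f p = v)).card := by
  rw [← Finset.card_biUnion]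
  · congr 1
    ext p
    simp only [Finset.mem_biUnion, Finset.mem_filter]
    constructor
    · rintro ⟨hpA, hpB⟩
      exact ⟨f p, hpB, hpA, rfl⟩
    · rintro ⟨v, hv, hpA, rfl⟩
      exact ⟨hpA, hv⟩
  · intro x hx y hy hxy
    rw [Function.onFun, Finset.disjoint_left]
    rintro p hp1 hp2
    rw [Finset.mem_filter] at hp1 hp2
    exact hxy (hp1.2 ▸ hp2.2)

lemma exists_perfect_matching (A : Finset (V × V)) (r : ℕ) (hr : r ≠ 0)
    (hout : ∀ v, (A.filter (fun p => p.1 = v)).card = r)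
    (hin : ∀ v, (A.filter (fun p => p.2 = v)).card = r) :
    ∃ M ⊆ A, (∀ v, ((M.filter (fun p => p.1 = v)).card = 1
      ∧ (M.filter (fun p => p.2 = v)).card = 1)) := by
  set t : V → Finset V := fun v => (A.filter (fun p => p.1 = v)).image Prod.snd with ht
  have hhall : ∀ s : Finset V, s.card ≤ (s.biUnion t).card := by
    intro s
    have h1 : (A.filter (fun p => p.1 ∈ s)).card = r * s.card := by
      rw [card_filter_coord A (fun p => p.1) s,
        Finset.sum_congr rfl (fun v _ => hout v), Finset.sum_const, smul_eq_mul, mul_comm]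
    have h2 : (A.filter (fun p => p.2 ∈ s.biUnion t)).card = r * (s.biUnion t).card := by
      rw [card_filter_coord A (fun p => p.2) _,
        Finset.sum_congr rfl (fun v _ => hin v), Finset.sum_const, smul_eq_mul, mul_comm]
    have hsub : A.filter (fun p => p.1 ∈ s) ⊆ A.filter (fun p => p.2 ∈ s.biUnion t) := by
      intro p hp
      rw [Finset.mem_filter] at hp ⊢
      refine ⟨hp.1, Finset.mem_biUnion.mpr ⟨p.1, hp.2, ?_⟩⟩
      rw [ht]
      exact Finset.mem_image.mpr ⟨p, Finset.mem_filter.mpr ⟨hp.1, rfl⟩, rfl⟩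
    have hcards := Finset.card_le_card hsub
    rw [h1, h2] at hcards
    exact Nat.le_of_mul_le_mul_left hcards (Nat.pos_of_ne_zero hr)
  obtain ⟨f, hfinj, hf⟩ := (Finset.all_card_le_biUnion_card_iff_exists_injective t).mp hhall
  have hfA : ∀ v, (v, f v) ∈ A := by
    intro v
    have hv := hf v
    rw [ht] at hv
    obtain ⟨p, hp, hps⟩ := Finset.mem_image.mp hv
    rw [Finset.mem_filter] at hp
    have hpe : p = (v, f v) := Prod.ext hp.2 hps
    rw [hpe] at hp
    exact hp.1
  have hfsurj : Function.Surjective f := (Finite.injective_iff_bijective.mp hfinj).2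
  refine ⟨Finset.univ.image (fun v => (v, f v)), ?_, ?_⟩
  · intro p hp
    obtain ⟨v, _, rfl⟩ := Finset.mem_image.mp hp
    exact hfA v
  · intro v
    constructor
    · have heq : (Finset.univ.image (fun v => (v, f v))).filter (fun p => p.1 = v)
          = {(v, f v)} := by
        ext p
        simp only [Finset.mem_filter, Finset.mem_image, Finset.mem_univ, true_and,
          Finset.mem_singleton]
        constructor
        · rintro ⟨⟨u, rfl⟩, h2⟩
          simp only at h2
          subst h2
          rfl
        · rintro rfl
          exact ⟨⟨v, rfl⟩, rfl⟩
      rw [heq, Finset.card_singleton]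
    · obtain ⟨u, hu⟩ := hfsurj v
      have heq : (Finset.univ.image (fun v => (v, f v))).filter (fun p => p.2 = v)
          = {(u, v)} := by
        ext p
        simp only [Finset.mem_filter, Finset.mem_image, Finset.mem_univ, true_and,
          Finset.mem_singleton]
        constructor
        · rintro ⟨⟨w, rfl⟩, h2⟩
          simp only at h2
          have : w = u := hfinj (h2.trans hu.symm)
          subst this
          rw [h2]
        · rintro rfl
          exact ⟨⟨u, Prod.ext rfl hu⟩, rfl⟩
      rw [heq, Finset.card_singleton]

lemma factorization : ∀ (r : ℕ) (A : Finset (V × V)),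
    (∀ v, (A.filter (fun p => p.1 = v)).card = r) →
    (∀ v, (A.filter (fun p => p.2 = v)).card = r) →
    ∃ P : Fin r → Finset (V × V),
      (∀ i, P i ⊆ A) ∧
      (∀ i v, ((P i).filter (fun p => p.1 = v)).card = 1
        ∧ ((P i).filter (fun p => p.2 = v)).card = 1) ∧
      (∀ i j, i ≠ j → Disjoint (P i) (P j)) ∧
      (∀ p, p ∈ A ↔ ∃ i, p ∈ P i) := by
  intro r
  induction r with
  | zero =>
    intro A hout hin
    refine ⟨Fin.elim0, fun i => i.elim0, fun i => i.elim0, fun i => i.elim0, ?_⟩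
    intro p
    constructor
    · intro hp
      exfalso
      have hc := hout p.1
      rw [Finset.card_eq_zero] at hc
      have hmem : p ∈ A.filter (fun q => q.1 = p.1) := Finset.mem_filter.mpr ⟨hp, rfl⟩
      rw [hc] at hmem
      simp at hmem
    · rintro ⟨i, _⟩
      exact i.elim0
  | succ r ih =>
    intro A hout hin
    obtain ⟨M, hMA, hM⟩ := exists_perfect_matching A (r+1) (Nat.succ_ne_zero r) hout hin
    have hfilter_sdiff : ∀ (f : V × V → V) v,
        ((A \ M).filter (fun p => f p = v))
          = (A.filter (fun p => f p = v)) \ (M.filter (fun p => f p = v)) := by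
      intro f v
      ext p
      simp only [Finset.mem_filter, Finset.mem_sdiff]
      tauto
    have hout' : ∀ v, ((A \ M).filter (fun p => p.1 = v)).card = r := by
      intro v
      rw [hfilter_sdiff (fun p => p.1) v,
        Finset.card_sdiff_of_subset (Finset.filter_subset_filter _ hMA), hout v, (hM v).1]
      omega
    have hin' : ∀ v, ((A \ M).filter (fun p => p.2 = v)).card = r := by
      intro v
      rw [hfilter_sdiff (fun p => p.2) v,
        Finset.card_sdiff_of_subset (Finset.filter_subset_filter _ hMA), hin v, (hM v).2]
      omega
    obtain ⟨P', h1, h2, h3, h4⟩ := ih (A \ M) hout' hin'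
    refine ⟨Fin.cases M P', ?_, ?_, ?_, ?_⟩
    · intro i
      rcases Fin.eq_zero_or_eq_succ i with rfl | ⟨j, rfl⟩
      · simpa using hMA
      · simp only [Fin.cases_succ]
        exact (h1 j).trans Finset.sdiff_subset
    · intro i v
      rcases Fin.eq_zero_or_eq_succ i with rfl | ⟨j, rfl⟩
      · simpa using hM v
      · simpa using h2 j v
    · intro i j hij
      rcases Fin.eq_zero_or_eq_succ i with rfl | ⟨i', rfl⟩
      · rcases Fin.eq_zero_or_eq_succ j with rfl | ⟨j', rfl⟩
        · exact absurd rfl hij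
        · simp only [Fin.cases_zero, Fin.cases_succ]
          exact Finset.disjoint_of_subset_right (h1 j') Finset.disjoint_sdiff
      · rcases Fin.eq_zero_or_eq_succ j with rfl | ⟨j', rfl⟩
        · simp only [Fin.cases_zero, Fin.cases_succ]
          exact (Finset.disjoint_of_subset_right (h1 i') Finset.disjoint_sdiff).symm
        · simp only [Fin.cases_succ]
          exact h3 i' j' (fun h => hij (congrArg Fin.succ h))
    · intro p
      constructor
      · intro hp
        by_cases hpM : p ∈ M
        · exact ⟨0, by simpa using hpM⟩
        · have hmem : p ∈ A \ M := Finset.mem_sdiff.mpr ⟨hp, hpM⟩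
          obtain ⟨j, hj⟩ := (h4 p).mp hmem
          exact ⟨j.succ, by simpa using hj⟩
      · rintro ⟨i, hi⟩
        rcases Fin.eq_zero_or_eq_succ i with rfl | ⟨j, rfl⟩
        · exact hMA (by simpa using hi)
        · exact Finset.sdiff_subset ((h1 j) (by simpa using hi))

end Matching

attribute [local instance 10] Classical.propDecidable

/-- The connected component of `v` in `F`, as a subgraph of `G`. -/
def comp (G F : SimpleGraph V) (hle : F ≤ G) (v : V) : G.Subgraph where
  verts := {w | F.Reachable v w}
  Adj := fun a b => F.Adj a b ∧ F.Reachable v a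
  adj_sub := fun h => hle h.1
  edge_vert := fun h => h.2
  symm := ⟨fun a b h => ⟨h.1.symm, h.2.trans h.1.reachable⟩⟩

lemma comp_eq_of_reachable {G F : SimpleGraph V} {hle : F ≤ G} {u v : V}
    (h : F.Reachable u v) : comp G F hle u = comp G F hle v := by
  apply SimpleGraph.Subgraph.ext
  · ext w
    simp only [comp, Set.mem_setOf_eq]
    exact ⟨fun hw => h.symm.trans hw, fun hw => h.trans hw⟩
  · funext a b
    simp only [comp, eq_iff_iff]
    exact ⟨fun ⟨h1, h2⟩ => ⟨h1, h.symm.trans h2⟩, fun ⟨h1, h2⟩ => ⟨h1, h.trans h2⟩⟩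

lemma comp_connected (G F : SimpleGraph V) (hle : F ≤ G) (v : V) :
    (comp G F hle v).Connected := by
  rw [SimpleGraph.Subgraph.connected_iff]
  constructor
  · have key : ∀ (x y : V) (p : F.Walk x y) (hx : F.Reachable v x) (hy : F.Reachable v y),
        (comp G F hle v).coe.Reachable ⟨x, hx⟩ ⟨y, hy⟩ := by
      intro x y p
      induction p with
      | nil =>
        intro hx hy
        rfl
      | @cons x c y hadj p ih =>
        intro hx hy
        have hstep : (comp G F hle v).coe.Adj ⟨x, hx⟩ ⟨c, hx.trans hadj.reachable⟩ := by
          show (comp G F hle v).Adj x c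
          exact ⟨hadj, hx⟩
        exact hstep.reachable.trans (ih (hx.trans hadj.reachable) hy)
    constructor
    rintro ⟨a, ha⟩ ⟨b, hb⟩
    have hab : F.Reachable a b := (ha : F.Reachable v a).symm.trans hb
    exact hab.elim (fun p => key a b p ha hb)
  · exact ⟨v, Reachable.refl v⟩

lemma comp_neighborSet {G F : SimpleGraph V} (hle : F ≤ G) {v a : V}
    (ha : F.Reachable v a) :
    (comp G F hle v).neighborSet a = F.neighborSet a := by
  ext b
  simp only [SimpleGraph.Subgraph.mem_neighborSet, SimpleGraph.mem_neighborSet]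
  exact ⟨fun h => h.1, fun h => ⟨h, ha⟩⟩

lemma pieces_of_two_regular [Fintype V] [DecidableEq V] (G F : SimpleGraph V) (hle : F ≤ G)
    (h2 : ∀ v, (F.neighborSet v).ncard = 2) :
    ∃ Q : Finset (G.Subgraph),
      (∀ H ∈ Q, H.Connected) ∧
      (∀ H ∈ Q, ∀ v ∈ H.verts, (H.neighborSet v).ncard = 2) ∧
      (∀ H ∈ Q, H.edgeSet.Nonempty) ∧
      ((Q : Set G.Subgraph).Pairwise (fun H K => Disjoint H.edgeSet K.edgeSet)) ∧
      (⋃ H ∈ Q, H.edgeSet) = F.edgeSet := by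
  refine ⟨Finset.univ.image (fun v => comp G F hle v), ?_, ?_, ?_, ?_, ?_⟩
  · intro H hH
    obtain ⟨v, _, rfl⟩ := Finset.mem_image.mp hH
    exact comp_connected G F hle v
  · intro H hH w hw
    obtain ⟨v, _, rfl⟩ := Finset.mem_image.mp hH
    rw [comp_neighborSet hle (hw : F.Reachable v w)]
    exact h2 w
  · intro H hH
    obtain ⟨v, _, rfl⟩ := Finset.mem_image.mp hH
    have hnon : (F.neighborSet v).Nonempty := by
      rw [← Set.ncard_pos (Set.toFinite _), h2 v]
      omega
    obtain ⟨b, hb⟩ := hnon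
    exact ⟨s(v, b), SimpleGraph.Subgraph.mem_edgeSet.mpr ⟨hb, Reachable.refl v⟩⟩
  · rintro H hH K hK hne
    rw [Set.disjoint_left]
    intro e heH heK
    obtain ⟨u, _, rfl⟩ := Finset.mem_image.mp (Finset.mem_coe.mp hH)
    obtain ⟨u', _, rfl⟩ := Finset.mem_image.mp (Finset.mem_coe.mp hK)
    apply hne
    induction e using Sym2.ind with
    | _ a b =>
      have h1 : (comp G F hle u).Adj a b := SimpleGraph.Subgraph.mem_edgeSet.mp heH
      have h2' : (comp G F hle u').Adj a b := SimpleGraph.Subgraph.mem_edgeSet.mp heK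
      rw [comp_eq_of_reachable (h1.2 : F.Reachable u a),
        comp_eq_of_reachable (h2'.2 : F.Reachable u' a)]
  · ext e
    simp only [Set.mem_iUnion, Finset.mem_coe, Finset.mem_image, Finset.mem_univ, true_and,
      exists_prop]
    constructor
    · rintro ⟨H, ⟨v, rfl⟩, he⟩
      induction e using Sym2.ind with
      | _ a b =>
        exact F.mem_edgeSet.mpr (SimpleGraph.Subgraph.mem_edgeSet.mp he).1
    · intro he
      induction e using Sym2.ind with
      | _ a b =>
        have hab : F.Adj a b := F.mem_edgeSet.mp he
        exact ⟨comp G F hle a, ⟨a, rfl⟩,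
          SimpleGraph.Subgraph.mem_edgeSet.mpr ⟨hab, Reachable.refl a⟩⟩

lemma two_regular_of_matching [Fintype V] [DecidableEq V] (G : SimpleGraph V)
    (A : Finset (V × V))
    (hA1 : ∀ p ∈ A, G.Adj p.1 p.2)
    (hA2 : ∀ u v, G.Adj u v → ((u,v) ∈ A ↔ (v,u) ∉ A))
    (M : Finset (V × V)) (hMA : M ⊆ A)
    (hM : ∀ v, ((M.filter (fun p => p.1 = v)).card = 1
      ∧ (M.filter (fun p => p.2 = v)).card = 1)) :
    ∃ F : SimpleGraph V, F ≤ G ∧ (∀ v, (F.neighborSet v).ncard = 2) ∧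
      F.edgeSet = {e | ∃ p ∈ M, s(p.1, p.2) = e} := by
  set s : Set (Sym2 V) := {e | ∃ p ∈ M, s(p.1, p.2) = e} with hs
  have hsG : ∀ e ∈ s, e ∈ G.edgeSet := by
    rintro e ⟨p, hp, rfl⟩
    exact G.mem_edgeSet.mpr (hA1 p (hMA hp))
  have hsnodiag : ∀ e ∈ s, ¬ e.IsDiag := by
    rintro e ⟨p, hp, rfl⟩
    simp only [Sym2.isDiag_iff_proj_eq]
    exact (hA1 p (hMA hp)).ne
  refine ⟨SimpleGraph.fromEdgeSet s, ?_, ?_, ?_⟩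
  · intro u v huv
    rw [SimpleGraph.fromEdgeSet_adj] at huv
    exact G.mem_edgeSet.mp (hsG _ huv.1)
  · intro v
    obtain ⟨pout, hpout⟩ := Finset.card_eq_one.mp (hM v).1
    obtain ⟨pin, hpin⟩ := Finset.card_eq_one.mp (hM v).2
    have hpoutM : pout ∈ M ∧ pout.1 = v := by
      have : pout ∈ M.filter (fun p => p.1 = v) := by rw [hpout]; exact Finset.mem_singleton_self _
      exact Finset.mem_filter.mp this
    have hpinM : pin ∈ M ∧ pin.2 = v := by
      have : pin ∈ M.filter (fun p => p.2 = v) := by rw [hpin]; exact Finset.mem_singleton_self _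
      exact Finset.mem_filter.mp this
    have hadjout : G.Adj v pout.2 := by
      have := hA1 pout (hMA hpoutM.1)
      rwa [hpoutM.2] at this
    have hadjin : G.Adj pin.1 v := by
      have := hA1 pin (hMA hpinM.1)
      rwa [hpinM.2] at this
    have hneq : pout.2 ≠ pin.1 := by
      intro heq
      have h1 : (v, pout.2) ∈ A := by
        have : pout = (v, pout.2) := Prod.ext hpoutM.2 rfl
        rw [← this]; exact hMA hpoutM.1
      have h2 : (pout.2, v) ∈ A := by
        have : pin = (pin.1, v) := Prod.ext rfl hpinM.2
        rw [← heq] at this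
        have h' : pin = (pout.2, v) := this
        rw [← h']; exact hMA hpinM.1
      exact (hA2 v pout.2 hadjout).mp h1 h2
    have hset : (SimpleGraph.fromEdgeSet s).neighborSet v = {pout.2, pin.1} := by
      ext b
      simp only [SimpleGraph.mem_neighborSet, SimpleGraph.fromEdgeSet_adj, Set.mem_insert_iff,
        Set.mem_singleton_iff]
      constructor
      · rintro ⟨⟨p, hp, hpe⟩, hne⟩
        rw [Sym2.eq_iff] at hpe
        rcases hpe with ⟨h1, h2⟩ | ⟨h1, h2⟩
        · -- p = (v, b)
          have hpv : p = (v, b) := Prod.ext h1 h2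
          have : p ∈ M.filter (fun q => q.1 = v) := Finset.mem_filter.mpr ⟨hp, h1⟩
          rw [hpout, Finset.mem_singleton] at this
          left
          rw [← this, hpv]
        · -- p = (b, v)
          have hpv : p = (b, v) := Prod.ext h1 h2
          have : p ∈ M.filter (fun q => q.2 = v) := Finset.mem_filter.mpr ⟨hp, h2⟩
          rw [hpin, Finset.mem_singleton] at this
          right
          rw [← this, hpv]
      · rintro (rfl | rfl)
        · refine ⟨⟨pout, hpoutM.1, ?_⟩, hadjout.ne⟩
          rw [hpoutM.2]
        · refine ⟨⟨pin, hpinM.1, ?_⟩, fun h => hadjin.ne h.symm⟩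
          rw [hpinM.2, Sym2.eq_swap]
    rw [hset]
    exact Set.ncard_pair hneq
  · rw [SimpleGraph.edgeSet_fromEdgeSet]
    ext e
    simp only [Set.mem_diff, Set.mem_setOf_eq]
    constructor
    · rintro ⟨h, _⟩
      exact h
    · intro h
      exact ⟨h, fun hd => hsnodiag e h hd⟩

lemma ncard_iUnion_eq_sum {G : SimpleGraph V} [Fintype V] [DecidableEq V]
    (S : Finset (G.Subgraph))
    (hdisj : (S : Set G.Subgraph).Pairwise (fun H K => Disjoint H.edgeSet K.edgeSet)) :
    (⋃ H ∈ S, H.edgeSet).ncard = ∑ H ∈ S, H.edgeSet.ncard := by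
  classical
  induction S using Finset.induction_on with
  | empty => simp
  | @insert a s ha ih =>
    rw [Finset.sum_insert ha]
    have hun : (⋃ H ∈ insert a s, H.edgeSet) = a.edgeSet ∪ ⋃ H ∈ s, H.edgeSet := by
      simp [Set.biUnion_insert]
    have hdisj' : Disjoint a.edgeSet (⋃ H ∈ s, H.edgeSet) := by
      rw [Set.disjoint_left]
      intro e hea heU
      obtain ⟨H, hH, heH⟩ := Set.mem_iUnion₂.mp heU
      have hne : a ≠ H := fun h => ha (h ▸ hH)
      exact Set.disjoint_left.mp
        (hdisj (Finset.mem_coe.mpr (Finset.mem_insert_self a s))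
          (Finset.mem_coe.mpr (Finset.mem_insert_of_mem hH)) hne) hea heH
    rw [hun, Set.ncard_union_eq hdisj' (Set.toFinite _) (Set.toFinite _),
      ih (hdisj.mono (fun x hx => by
        simp only [Finset.coe_insert, Set.mem_insert_iff]
        exact Or.inr hx))]

lemma odd_filter_parity {G : SimpleGraph V} [Fintype V] (S : Finset (G.Subgraph)) :
    (S.filter (fun H => Odd (H.edgeSet.ncard))).card % 2
      = (∑ H ∈ S, H.edgeSet.ncard) % 2 := by
  have hkey : ∑ H ∈ S, H.edgeSet.ncard % 2
      = (S.filter (fun H => Odd (H.edgeSet.ncard))).card := by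
    rw [← Finset.sum_filter_add_sum_filter_not S (fun H => Odd (H.edgeSet.ncard))
      (fun H => H.edgeSet.ncard % 2)]
    have ha : ∀ H ∈ S.filter (fun H => Odd (H.edgeSet.ncard)), H.edgeSet.ncard % 2 = 1 :=
      fun H hH => Nat.odd_iff.mp (Finset.mem_filter.mp hH).2
    have hb : ∀ H ∈ S.filter (fun H => ¬ Odd (H.edgeSet.ncard)), H.edgeSet.ncard % 2 = 0 :=
      fun H hH => Nat.even_iff.mp (Nat.not_odd_iff_even.mp (Finset.mem_filter.mp hH).2)
    rw [Finset.sum_congr rfl ha, Finset.sum_congr rfl hb, Finset.sum_const, Finset.sum_const]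
    simp
  rw [Finset.sum_nat_mod, hkey]

lemma exists_touching {G : SimpleGraph V} [Fintype V] (hGc : G.Connected)
    (P : Finset (G.Subgraph))
    (hconn : ∀ H ∈ P, H.Connected)
    (hne : ∀ H ∈ P, H.edgeSet.Nonempty)
    (hcover : (⋃ H ∈ P, H.edgeSet) = G.edgeSet)
    (hcard : 2 ≤ P.card) (X : G.Subgraph) (hX : X ∈ P) :
    ∃ Y ∈ P, Y ≠ X ∧ (X.verts ∩ Y.verts).Nonempty := by
  by_contra hno
  push_neg at hno
  have hclosed : ∀ v ∈ X.verts, ∀ w, G.Adj v w → w ∈ X.verts := by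
    intro v hv w hvw
    have he : s(v, w) ∈ G.edgeSet := G.mem_edgeSet.mpr hvw
    rw [← hcover] at he
    obtain ⟨Z, hZ, heZ⟩ := Set.mem_iUnion₂.mp he
    have hZadj : Z.Adj v w := SimpleGraph.Subgraph.mem_edgeSet.mp heZ
    by_cases hZX : Z = X
    · subst hZX
      exact Z.edge_vert hZadj.symm
    · exfalso
      have h1 := hno Z (Finset.mem_coe.mp hZ) hZX
      have h2 : (X.verts ∩ Z.verts).Nonempty := ⟨v, hv, Z.edge_vert hZadj⟩
      rw [h1] at h2
      exact Set.not_nonempty_empty h2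
  have hXne : X.verts.Nonempty := (SimpleGraph.Subgraph.connected_iff.mp (hconn X hX)).2
  obtain ⟨v0, hv0⟩ := hXne
  have hwalk : ∀ (a b : V), G.Walk a b → a ∈ X.verts → b ∈ X.verts := by
    intro a b p
    induction p with
    | nil => exact id
    | @cons a c b h q ih => exact fun ha => ih (hclosed _ ha _ h)
  have huniv : ∀ w, w ∈ X.verts := by
    intro w
    obtain ⟨p⟩ := hGc.preconnected v0 w
    exact hwalk v0 w p hv0
  obtain ⟨Y, hY, hYX⟩ := Finset.exists_mem_ne (s := P) (by omega) X
  obtain ⟨e, he⟩ := hne Y hY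
  have : (X.verts ∩ Y.verts).Nonempty := by
    induction e using Sym2.ind with
    | _ a b =>
      have hYadj : Y.Adj a b := SimpleGraph.Subgraph.mem_edgeSet.mp he
      exact ⟨a, huniv a, Y.edge_vert hYadj⟩
  rw [hno Y hY hYX] at this
  exact Set.not_nonempty_empty this

lemma merge_step {G : SimpleGraph V} [Fintype V]
    (P : Finset (G.Subgraph))
    (hconn : ∀ H ∈ P, H.Connected)
    (heven : ∀ H ∈ P, ∀ v ∈ H.verts, Even ((H.neighborSet v).ncard))
    (hnonempty : ∀ H ∈ P, H.edgeSet.Nonempty)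
    (hdisj : (P : Set G.Subgraph).Pairwise (fun H K => Disjoint H.edgeSet K.edgeSet))
    (hcover : (⋃ H ∈ P, H.edgeSet) = G.edgeSet)
    (X Y : G.Subgraph) (hX : X ∈ P) (hY : Y ∈ P) (hne : Y ≠ X)
    (htouch : (X.verts ∩ Y.verts).Nonempty) :
    ∃ P' : Finset (G.Subgraph),
      P'.card + 1 = P.card ∧
      (∀ H ∈ P', H.Connected) ∧
      (∀ H ∈ P', ∀ v ∈ H.verts, Even ((H.neighborSet v).ncard)) ∧
      (∀ H ∈ P', H.edgeSet.Nonempty) ∧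
      ((P' : Set G.Subgraph).Pairwise (fun H K => Disjoint H.edgeSet K.edgeSet)) ∧
      ((⋃ H ∈ P', H.edgeSet) = G.edgeSet) ∧
      ((X ⊔ Y).edgeSet.ncard = X.edgeSet.ncard + Y.edgeSet.ncard) ∧
      ((P'.filter (fun H => Odd (H.edgeSet.ncard))).card
          + (if Odd (X.edgeSet.ncard) then 1 else 0)
          + (if Odd (Y.edgeSet.ncard) then 1 else 0)
        = (P.filter (fun H => Odd (H.edgeSet.ncard))).card
          + (if Odd ((X ⊔ Y).edgeSet.ncard) then 1 else 0)) := by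
  classical
  have hXY : X ≠ Y := fun h => hne h.symm
  have hdisjXY : Disjoint X.edgeSet Y.edgeSet :=
    hdisj (Finset.mem_coe.mpr hX) (Finset.mem_coe.mpr hY) hXY
  set Z := X ⊔ Y with hZ
  set S := (P.erase X).erase Y with hS
  have hYeX : Y ∈ P.erase X := Finset.mem_erase.mpr ⟨hne, hY⟩
  have hSsub : S ⊆ P := (Finset.erase_subset _ _).trans (Finset.erase_subset _ _)
  have hSmem : ∀ {H}, H ∈ S → H ∈ P ∧ H ≠ X ∧ H ≠ Y := by
    intro H hH
    rw [hS, Finset.mem_erase, Finset.mem_erase] at hH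
    exact ⟨hH.2.2, hH.2.1, hH.1⟩
  have hPS : P = insert X (insert Y S) := by
    rw [hS, Finset.insert_erase hYeX, Finset.insert_erase hX]
  have hZedge : Z.edgeSet = X.edgeSet ∪ Y.edgeSet := SimpleGraph.Subgraph.edgeSet_sup
  have hZnotS : Z ∉ S := by
    intro hZS
    obtain ⟨hZP, hZX, _⟩ := hSmem hZS
    obtain ⟨e, heX⟩ := hnonempty X hX
    have heZ : e ∈ Z.edgeSet := hZedge ▸ Set.mem_union_left _ heX
    exact Set.disjoint_left.mp
      (hdisj (Finset.mem_coe.mpr hZP) (Finset.mem_coe.mpr hX) hZX) heZ heX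
  refine ⟨insert Z S, ?_, ?_, ?_, ?_, ?_, ?_, ?_, ?_⟩
  · rw [Finset.card_insert_of_notMem hZnotS, hS,
      Finset.card_erase_of_mem hYeX, Finset.card_erase_of_mem hX]
    have h2 : 2 ≤ P.card :=
      Finset.one_lt_card.mpr ⟨X, hX, Y, hY, hXY⟩
    omega
  · intro H hH
    rcases Finset.mem_insert.mp hH with rfl | hH'
    · refine SimpleGraph.Subgraph.connected_sup (hconn X hX).preconnected (hconn Y hY).preconnected ?_
      rwa [SimpleGraph.Subgraph.verts_inf]
    · exact hconn H (hSsub hH')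
  · intro H hH v hv
    rcases Finset.mem_insert.mp hH with rfl | hH'
    · have hnbrs : (X ⊔ Y).neighborSet v = X.neighborSet v ∪ Y.neighborSet v :=
        SimpleGraph.Subgraph.neighborSet_sup v
      have hnbrdisj : Disjoint (X.neighborSet v) (Y.neighborSet v) := by
        rw [Set.disjoint_left]
        intro b hbX hbY
        exact Set.disjoint_left.mp hdisjXY
          (SimpleGraph.Subgraph.mem_edgeSet.mpr hbX)
          (SimpleGraph.Subgraph.mem_edgeSet.mpr hbY)
      have heach : ∀ W, W ∈ P → Even ((W.neighborSet v).ncard) := by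
        intro W hW
        by_cases hvW : v ∈ W.verts
        · exact heven W hW v hvW
        · have : W.neighborSet v = ∅ :=
            Set.eq_empty_iff_forall_notMem.mpr (fun b hb => hvW (W.edge_vert hb))
          rw [this]
          simp
      rw [hnbrs, Set.ncard_union_eq hnbrdisj (Set.toFinite _) (Set.toFinite _)]
      exact (heach X hX).add (heach Y hY)
    · exact heven H (hSsub hH') v hv
  · intro H hH
    rcases Finset.mem_insert.mp hH with rfl | hH'
    · obtain ⟨e, heX⟩ := hnonempty X hX
      exact ⟨e, hZedge ▸ Set.mem_union_left _ heX⟩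
    · exact hnonempty H (hSsub hH')
  · intro H hH K hK hHK
    simp only [Finset.coe_insert, Set.mem_insert_iff, Finset.mem_coe] at hH hK
    have hZdisj : ∀ W, W ∈ S → Disjoint Z.edgeSet W.edgeSet := by
      intro W hW
      obtain ⟨hWP, hWX, hWY⟩ := hSmem hW
      rw [hZedge, Set.disjoint_union_left]
      constructor
      · exact hdisj (Finset.mem_coe.mpr hX) (Finset.mem_coe.mpr hWP) (fun h => hWX h.symm)
      · exact hdisj (Finset.mem_coe.mpr hY) (Finset.mem_coe.mpr hWP) (fun h => hWY h.symm)
    rcases hH with rfl | hH' <;> rcases hK with rfl | hK'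
    · exact absurd rfl hHK
    · exact hZdisj K hK'
    · exact (hZdisj H hH').symm
    · exact hdisj (Finset.mem_coe.mpr (hSsub hH')) (Finset.mem_coe.mpr (hSsub hK')) hHK
  · rw [← hcover]
    conv_rhs => rw [hPS]
    ext e
    simp only [Set.mem_iUnion, Finset.mem_insert, Finset.mem_coe, exists_prop]
    constructor
    · rintro ⟨H, hH, heH⟩
      rcases hH with rfl | hH'
      · rw [hZedge] at heH
        rcases heH with h | h
        · exact ⟨X, Or.inl rfl, h⟩
        · exact ⟨Y, Or.inr (Or.inl rfl), h⟩
      · exact ⟨H, Or.inr (Or.inr hH'), heH⟩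
    · rintro ⟨H, hH, heH⟩
      rcases hH with rfl | rfl | hH'
      · exact ⟨Z, Or.inl rfl, hZedge ▸ Set.mem_union_left _ heH⟩
      · exact ⟨Z, Or.inl rfl, hZedge ▸ Set.mem_union_right _ heH⟩
      · exact ⟨H, Or.inr hH', heH⟩
  · rw [hZedge]
    exact Set.ncard_union_eq hdisjXY (Set.toFinite _) (Set.toFinite _)
  · have hYnotS : Y ∉ S := fun h => (hSmem h).2.2 rfl
    have hXnotS : X ∉ S := fun h => (hSmem h).2.1 rfl
    have hXfS : X ∉ S.filter (fun H => Odd (H.edgeSet.ncard)) :=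
      fun h => hXnotS (Finset.mem_of_mem_filter _ h)
    have hYfS : Y ∉ S.filter (fun H => Odd (H.edgeSet.ncard)) :=
      fun h => hYnotS (Finset.mem_of_mem_filter _ h)
    have hZfS : Z ∉ S.filter (fun H => Odd (H.edgeSet.ncard)) :=
      fun h => hZnotS (Finset.mem_of_mem_filter _ h)
    have hXiY : X ∉ insert Y (S.filter (fun H => Odd (H.edgeSet.ncard))) := by
      rw [Finset.mem_insert]
      rintro (h | h)
      · exact hXY h
      · exact hXfS h
    have hcZ : ((insert Z S).filter (fun H => Odd (H.edgeSet.ncard))).card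
        = (S.filter (fun H => Odd (H.edgeSet.ncard))).card
          + (if Odd (Z.edgeSet.ncard) then 1 else 0) := by
      rw [Finset.filter_insert]
      split_ifs with h
      · rw [Finset.card_insert_of_notMem hZfS]
        try omega
      · try omega
    have hcP : (P.filter (fun H => Odd (H.edgeSet.ncard))).card
        = (S.filter (fun H => Odd (H.edgeSet.ncard))).card
          + (if Odd (X.edgeSet.ncard) then 1 else 0)
          + (if Odd (Y.edgeSet.ncard) then 1 else 0) := by
      rw [hPS, Finset.filter_insert, Finset.filter_insert]
      split_ifs with h1 h2 h2
      · rw [Finset.card_insert_of_notMem hXiY, Finset.card_insert_of_notMem hYfS]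
        try omega
      · rw [Finset.card_insert_of_notMem hXfS]
        try omega
      · rw [Finset.card_insert_of_notMem hYfS]
        try omega
      · try omega
    rw [hcZ, hcP]
    omega

lemma merge {G : SimpleGraph V} [Fintype V] (hGc : G.Connected) (k : ℕ) (hk1 : 1 ≤ k) :
    ∀ (m : ℕ) (P : Finset (G.Subgraph)), P.card = m →
    (∀ H ∈ P, H.Connected) →
    (∀ H ∈ P, ∀ v ∈ H.verts, Even ((H.neighborSet v).ncard)) →
    (∀ H ∈ P, H.edgeSet.Nonempty) →
    ((P : Set G.Subgraph).Pairwise (fun H K => Disjoint H.edgeSet K.edgeSet)) →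
    ((⋃ H ∈ P, H.edgeSet) = G.edgeSet) →
    k ≤ (P.filter (fun H => Odd (H.edgeSet.ncard))).card →
    (P.filter (fun H => Odd (H.edgeSet.ncard))).card % 2 = k % 2 →
    ∃ D : Fin k → G.Subgraph, IsKOddDecomposition G k D := by
  intro m
  induction m using Nat.strong_induction_on with
  | _ m ih =>
  intro P hPm hconn heven hnonempty hdisj hcover hok hpar
  have hfle : (P.filter (fun H => Odd (H.edgeSet.ncard))).card ≤ P.card :=
    Finset.card_filter_le _ _
  by_cases hmk : P.card = k
  · have hfe : P.filter (fun H => Odd (H.edgeSet.ncard)) = P :=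
      Finset.eq_of_subset_of_card_le (Finset.filter_subset _ _) (by omega)
    have hallodd : ∀ H ∈ P, Odd (H.edgeSet.ncard) := fun H hH => by
      rw [← hfe] at hH
      exact (Finset.mem_filter.mp hH).2
    have hcardP : Fintype.card {x // x ∈ P} = k := by
      rw [Fintype.card_coe]
      exact hmk
    set eqv := Fintype.equivFinOfCardEq hcardP with heqv
    refine ⟨fun i => ((eqv.symm i : {x // x ∈ P}) : G.Subgraph), ?_, ?_, ?_, ?_⟩
    · intro i
      exact ⟨hconn _ (eqv.symm i).2, fun v hv => heven _ (eqv.symm i).2 v hv⟩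
    · intro i
      exact hallodd _ (eqv.symm i).2
    · intro i j hij
      refine hdisj (Finset.mem_coe.mpr (eqv.symm i).2) (Finset.mem_coe.mpr (eqv.symm j).2) ?_
      intro h
      exact hij (eqv.symm.injective (Subtype.ext h))
    · rw [← hcover]
      ext e
      constructor
      · intro he
        obtain ⟨i, hi⟩ := Set.mem_iUnion.mp he
        exact Set.mem_iUnion₂.mpr ⟨_, (eqv.symm i).2, hi⟩
      · intro he
        obtain ⟨H, hH, heH⟩ := Set.mem_iUnion₂.mp he
        apply Set.mem_iUnion.mpr
        refine ⟨eqv ⟨H, hH⟩, ?_⟩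
        simp only [Equiv.symm_apply_apply]
        exact heH
  · have h2le : 2 ≤ P.card := by omega
    by_cases hev : ∃ X ∈ P, ¬ Odd (X.edgeSet.ncard)
    · obtain ⟨X, hX, hXev⟩ := hev
      obtain ⟨Y, hY, hYX, hXY⟩ := exists_touching hGc P hconn hnonempty hcover h2le X hX
      obtain ⟨P', hc1, hc2, hc3, hc4, hc5, hc6, hc7, hc8⟩ :=
        merge_step P hconn heven hnonempty hdisj hcover X Y hX hY hYX hXY
      have hofilter : (P'.filter (fun H => Odd (H.edgeSet.ncard))).card
          = (P.filter (fun H => Odd (H.edgeSet.ncard))).card := by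
        have hX0 : (if Odd (X.edgeSet.ncard) then 1 else 0) = 0 := if_neg hXev
        have hxe : X.edgeSet.ncard % 2 = 0 :=
          Nat.even_iff.mp (Nat.not_odd_iff_even.mp hXev)
        have hZY : Odd ((X ⊔ Y).edgeSet.ncard) ↔ Odd (Y.edgeSet.ncard) := by
          rw [Nat.odd_iff, Nat.odd_iff, hc7]
          omega
        by_cases hoY : Odd (Y.edgeSet.ncard)
        · rw [hX0, if_pos hoY, if_pos (hZY.mpr hoY)] at hc8
          omega
        · rw [hX0, if_neg hoY, if_neg (fun h => hoY (hZY.mp h))] at hc8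
          omega
      exact ih (m - 1) (by omega) P' (by omega) hc2 hc3 hc4 hc5 hc6
        (by rw [hofilter]; exact hok) (by rw [hofilter]; exact hpar)
    · push_neg at hev
      have hall : ∀ X ∈ P, Odd (X.edgeSet.ncard) := hev
      have hfe : P.filter (fun H => Odd (H.edgeSet.ncard)) = P :=
        Finset.filter_true_of_mem hall
      rw [hfe] at hok hpar
      obtain ⟨X, hX⟩ := Finset.card_pos.mp (by omega : 0 < P.card)
      obtain ⟨Y, hY, hYX, hXY⟩ := exists_touching hGc P hconn hnonempty hcover h2le X hX
      obtain ⟨P', hc1, hc2, hc3, hc4, hc5, hc6, hc7, hc8⟩ :=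
        merge_step P hconn heven hnonempty hdisj hcover X Y hX hY hYX hXY
      have hoX := hall X hX
      have hoY := hall Y hY
      have hZev : ¬ Odd ((X ⊔ Y).edgeSet.ncard) := by
        rw [Nat.odd_iff] at hoX hoY ⊢
        rw [hc7]
        omega
      rw [if_pos hoX, if_pos hoY, if_neg hZev, hfe] at hc8
      have hfle' : (P'.filter (fun H => Odd (H.edgeSet.ncard))).card ≤ P'.card :=
        Finset.card_filter_le _ _
      refine ih (m - 1) (by omega) P' (by omega) hc2 hc3 hc4 hc5 hc6 ?_ ?_
      · omega
      · omega

lemma degree_eq_ncard {G : SimpleGraph V} [Fintype V] [DecidableRel G.Adj] (v : V) :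
    G.degree v = (G.neighborSet v).ncard := by
  rw [← SimpleGraph.card_neighborSet_eq_degree, Set.ncard_eq_toFinset_card',
    Set.toFinset_card]

lemma edge_count {G : SimpleGraph V} [Fintype V] (c : ℕ)
    (h : ∀ v, (G.neighborSet v).ncard = c) :
    2 * G.edgeSet.ncard = c * Fintype.card V := by
  classical
  have hs := SimpleGraph.sum_degrees_eq_twice_card_edges G
  have hd : ∀ v : V, G.degree v = c := fun v => by rw [degree_eq_ncard, h v]
  rw [Finset.sum_congr rfl (fun v _ => hd v), Finset.sum_const, smul_eq_mul] at hs
  have hE : G.edgeSet.ncard = G.edgeFinset.card := by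
    rw [SimpleGraph.edgeFinset, Set.ncard_eq_toFinset_card']
  rw [hE, ← hs, Finset.card_univ]
  exact Nat.mul_comm _ _

end OddDecompAux

/-- A connected `2d`-regular graph of odd order (`d ≥ 1`) admits a `k`-odd
decomposition for each `1 ≤ k ≤ d` with `k ≡ d (mod 2)`. -/
theorem regular_oddOrder_kOddDecomposition {V : Type*} [Fintype V] (G : SimpleGraph V)
    (d : ℕ) (hd : 1 ≤ d) (hconn : G.Connected)
    (hreg : ∀ v : V, (G.neighborSet v).ncard = 2 * d)
    (hodd : Odd (Fintype.card V))
    (k : ℕ) (hk1 : 1 ≤ k) (hkd : k ≤ d) (hpar : k % 2 = d % 2) :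
    ∃ D : Fin k → G.Subgraph, IsKOddDecomposition G k D := by
  classical
  have heven : ∀ v, Even ((G.neighborSet v).ncard) := fun v => by
    rw [hreg v]
    exact even_two_mul d
  obtain ⟨A, hA1, hA2, hA3⟩ :=
    OddDecompAux.exists_orientation (G.edgeSet.ncard) G le_rfl heven
  have hsplit : ∀ v, (A.filter (fun p => p.1 = v)).card
      + (A.filter (fun p => p.2 = v)).card = 2 * d := by
    intro v
    have hdisjf : Disjoint (A.filter (fun p => p.1 = v)) (A.filter (fun p => p.2 = v)) := by
      rw [Finset.disjoint_left]
      intro p hp1 hp2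
      have h1 := (Finset.mem_filter.mp hp1).2
      have h2 := (Finset.mem_filter.mp hp2).2
      exact (hA1 p (Finset.mem_filter.mp hp1).1).ne (h1.trans h2.symm)
    rw [← Finset.card_union_of_disjoint hdisjf, ← Finset.filter_or]
    have hcardnbr : (G.neighborSet v).toFinset.card = 2 * d := by
      rw [← Set.ncard_eq_toFinset_card']
      exact hreg v
    rw [← hcardnbr]
    apply Finset.card_bij (fun p _ => if p.1 = v then p.2 else p.1)
    · intro p hp
      rw [Finset.mem_filter] at hp
      obtain ⟨hpA, hp1 | hp2⟩ := hp
      · rw [if_pos hp1]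
        rw [Set.mem_toFinset]
        have := hA1 p hpA
        rw [hp1] at this
        exact this
      · by_cases hp1 : p.1 = v
        · rw [if_pos hp1, Set.mem_toFinset]
          have := hA1 p hpA
          rw [hp1] at this
          exact this
        · rw [if_neg hp1, Set.mem_toFinset]
          have := hA1 p hpA
          rw [hp2] at this
          exact this.symm
    · intro p hp q hq hpq
      rw [Finset.mem_filter] at hp hq
      have hpA := hp.1
      have hqA := hq.1
      have hpadj := hA1 p hpA
      have hqadj := hA1 q hqA
      by_cases h1 : p.1 = v <;> by_cases h2 : q.1 = v
      · rw [if_pos h1, if_pos h2] at hpq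
        exact Prod.ext (h1.trans h2.symm) hpq
      · rw [if_pos h1, if_neg h2] at hpq
        exfalso
        have hq2 : q.2 = v := by
          rcases hq.2 with h | h
          · exact absurd h h2
          · exact h
        have hpv : p = (v, q.1) := Prod.ext h1 hpq
        have hqv : q = (q.1, v) := Prod.ext rfl hq2
        have hadj : G.Adj v q.1 := by
          have := hA1 p hpA
          rw [hpv] at this
          exact this
        have hx1 : (v, q.1) ∈ A := hpv ▸ hpA
        have hx2 : (q.1, v) ∈ A := hqv ▸ hqA
        exact (hA2 v q.1 hadj).mp hx1 hx2
      · rw [if_neg h1, if_pos h2] at hpq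
        exfalso
        have hp2 : p.2 = v := by
          rcases hp.2 with h | h
          · exact absurd h h1
          · exact h
        have hpv : p = (p.1, v) := Prod.ext rfl hp2
        have hqv : q = (v, p.1) := Prod.ext h2 hpq.symm
        have hadj : G.Adj v p.1 := by
          have := hA1 q hqA
          rw [hqv] at this
          exact this
        have hx1 : (v, p.1) ∈ A := hqv ▸ hqA
        have hx2 : (p.1, v) ∈ A := hpv ▸ hpA
        exact (hA2 v p.1 hadj).mp hx1 hx2
      · rw [if_neg h1, if_neg h2] at hpq
        have hp2 : p.2 = v := by
          rcases hp.2 with h | h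
          · exact absurd h h1
          · exact h
        have hq2 : q.2 = v := by
          rcases hq.2 with h | h
          · exact absurd h h2
          · exact h
        exact Prod.ext hpq (hp2.trans hq2.symm)
    · intro b hb
      rw [Set.mem_toFinset] at hb
      have hadj : G.Adj v b := hb
      have : (v, b) ∈ A ∨ (b, v) ∈ A := by
        by_cases h : (v, b) ∈ A
        · exact Or.inl h
        · right
          by_contra h2
          exact h ((hA2 v b hadj).mpr h2)
      rcases this with h | h
      · refine ⟨(v, b), Finset.mem_filter.mpr ⟨h, Or.inl rfl⟩, ?_⟩
        rw [if_pos rfl]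
      · refine ⟨(b, v), Finset.mem_filter.mpr ⟨h, Or.inr rfl⟩, ?_⟩
        rw [if_neg (fun hh => hadj.ne hh.symm)]
  have hout : ∀ v, (A.filter (fun p => p.1 = v)).card = d := by
    intro v
    have h1 := hA3 v
    have h2 := hsplit v
    omega
  have hin : ∀ v, (A.filter (fun p => p.2 = v)).card = d := by
    intro v
    have h1 := hA3 v
    have h2 := hsplit v
    omega
  obtain ⟨Pm, hP1, hP2, hP3, hP4⟩ := OddDecompAux.factorization d A hout hin
  choose F hF1 hF2 hF3 using fun i : Fin d =>
    OddDecompAux.two_regular_of_matching G A hA1 hA2 (Pm i) (hP1 i)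
      (fun v => hP2 i v)
  choose Q hQ1 hQ2 hQ3 hQ4 hQ5 using fun i : Fin d =>
    OddDecompAux.pieces_of_two_regular G (F i) (hF1 i) (hF2 i)
  have hFdisj : ∀ i j, i ≠ j → Disjoint (F i).edgeSet (F j).edgeSet := by
    intro i j hij
    rw [Set.disjoint_left]
    intro e hei hej
    rw [hF3 i] at hei
    rw [hF3 j] at hej
    obtain ⟨p, hp, hpe⟩ := hei
    obtain ⟨q, hq, hqe⟩ := hej
    have hpq : s(p.1, p.2) = s(q.1, q.2) := by rw [hpe, hqe]
    rw [Sym2.eq_iff] at hpq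
    rcases hpq with ⟨h1, h2⟩ | ⟨h1, h2⟩
    · have hpq2 : p = q := Prod.ext h1 h2
      exact Finset.disjoint_left.mp (hP3 i j hij) hp (hpq2 ▸ hq)
    · have hpA : p ∈ A := hP1 i hp
      have hqA : q ∈ A := hP1 j hq
      have hadj : G.Adj p.1 p.2 := hA1 p hpA
      have hqv : q = (p.2, p.1) := Prod.ext h2.symm h1.symm
      rw [hqv] at hqA
      exact (hA2 p.1 p.2 hadj).mp hpA hqA
  have hFcover : (⋃ i, (F i).edgeSet) = G.edgeSet := by
    ext e
    simp only [Set.mem_iUnion]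
    constructor
    · rintro ⟨i, hei⟩
      rw [hF3 i] at hei
      obtain ⟨p, hp, hpe⟩ := hei
      rw [← hpe]
      exact G.mem_edgeSet.mpr (hA1 p (hP1 i hp))
    · intro he
      induction e using Sym2.ind with
      | _ u v =>
        have hadj := G.mem_edgeSet.mp he
        have hA' : (u, v) ∈ A ∨ (v, u) ∈ A := by
          by_cases h : (u, v) ∈ A
          · exact Or.inl h
          · right
            by_contra h2
            exact h ((hA2 u v hadj).mpr h2)
        rcases hA' with h | h
        · obtain ⟨i, hi⟩ := (hP4 (u, v)).mp h
          exact ⟨i, by rw [hF3 i]; exact ⟨(u, v), hi, rfl⟩⟩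
        · obtain ⟨i, hi⟩ := (hP4 (v, u)).mp h
          refine ⟨i, ?_⟩
          rw [hF3 i]
          exact ⟨(v, u), hi, Sym2.eq_swap⟩
  set Qall : Finset (G.Subgraph) := Finset.univ.biUnion Q with hQall
  have hmem : ∀ H, H ∈ Qall ↔ ∃ i, H ∈ Q i := by
    intro H
    simp [hQall]
  have hsubF : ∀ i H, H ∈ Q i → H.edgeSet ⊆ (F i).edgeSet := by
    intro i H hH
    rw [← hQ5 i]
    exact fun e he => Set.mem_iUnion₂.mpr ⟨H, hH, he⟩
  have hconn' : ∀ H ∈ Qall, H.Connected := by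
    intro H hH
    obtain ⟨i, hi⟩ := (hmem H).mp hH
    exact hQ1 i H hi
  have heven' : ∀ H ∈ Qall, ∀ v ∈ H.verts, Even ((H.neighborSet v).ncard) := by
    intro H hH v hv
    obtain ⟨i, hi⟩ := (hmem H).mp hH
    rw [hQ2 i H hi v hv]
    exact ⟨1, rfl⟩
  have hne' : ∀ H ∈ Qall, H.edgeSet.Nonempty := by
    intro H hH
    obtain ⟨i, hi⟩ := (hmem H).mp hH
    exact hQ3 i H hi
  have hdisj' : (Qall : Set G.Subgraph).Pairwise
      (fun H K => Disjoint H.edgeSet K.edgeSet) := by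
    intro H hH K hK hne
    obtain ⟨i, hi⟩ := (hmem H).mp (Finset.mem_coe.mp hH)
    obtain ⟨j, hj⟩ := (hmem K).mp (Finset.mem_coe.mp hK)
    by_cases hij : i = j
    · subst hij
      exact hQ4 i (Finset.mem_coe.mpr hi) (Finset.mem_coe.mpr hj) hne
    · exact Set.disjoint_of_subset (hsubF i H hi) (hsubF j K hj) (hFdisj i j hij)
  have hcover' : (⋃ H ∈ Qall, H.edgeSet) = G.edgeSet := by
    ext e
    constructor
    · intro he
      obtain ⟨H, hH, heH⟩ := Set.mem_iUnion₂.mp he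
      obtain ⟨i, hi⟩ := (hmem H).mp hH
      rw [← hFcover]
      exact Set.mem_iUnion.mpr ⟨i, hsubF i H hi heH⟩
    · intro he
      rw [← hFcover] at he
      obtain ⟨i, hi⟩ := Set.mem_iUnion.mp he
      rw [← hQ5 i] at hi
      obtain ⟨H, hH, heH⟩ := Set.mem_iUnion₂.mp hi
      exact Set.mem_iUnion₂.mpr ⟨H, (hmem H).mpr ⟨i, hH⟩, heH⟩
  have hFodd : ∀ i, Odd ((F i).edgeSet.ncard) := by
    intro i
    have h2 := OddDecompAux.edge_count 2 (hF2 i)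
    have hn := hodd
    rw [Nat.odd_iff] at hn ⊢
    omega
  have hoddpiece : ∀ i, ∃ H, H ∈ Q i ∧ Odd (H.edgeSet.ncard) := by
    intro i
    by_contra h
    push_neg at h
    have hsum := OddDecompAux.ncard_iUnion_eq_sum (Q i) (hQ4 i)
    rw [hQ5 i] at hsum
    have heven2 : Even ((F i).edgeSet.ncard) := by
      rw [hsum]
      exact Finset.even_sum _ (fun H hH => Nat.not_odd_iff_even.mp (h H hH))
    exact (Nat.not_odd_iff_even.mpr heven2) (hFodd i)
  choose Ho hHo1 hHo2 using hoddpiece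
  have hHoinj : Function.Injective Ho := by
    intro i j hij
    by_contra hne
    obtain ⟨e, he⟩ := hQ3 i (Ho i) (hHo1 i)
    have he1 : e ∈ (F i).edgeSet := hsubF i (Ho i) (hHo1 i) he
    have he2 : e ∈ (F j).edgeSet := by
      apply hsubF j (Ho j) (hHo1 j)
      rw [← hij]
      exact he
    exact Set.disjoint_left.mp (hFdisj i j hne) he1 he2
  have hcount : d ≤ (Qall.filter (fun H => Odd (H.edgeSet.ncard))).card := by
    have himg : Finset.univ.image Ho ⊆ Qall.filter (fun H => Odd (H.edgeSet.ncard)) := by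
      intro H hH
      obtain ⟨i, _, rfl⟩ := Finset.mem_image.mp hH
      exact Finset.mem_filter.mpr ⟨(hmem _).mpr ⟨i, hHo1 i⟩, hHo2 i⟩
    have hle := Finset.card_le_card himg
    rwa [Finset.card_image_of_injective _ hHoinj, Finset.card_univ, Fintype.card_fin] at hle
  have hparity : (Qall.filter (fun H => Odd (H.edgeSet.ncard))).card % 2 = k % 2 := by
    rw [OddDecompAux.odd_filter_parity Qall,
      ← OddDecompAux.ncard_iUnion_eq_sum Qall hdisj', hcover']
    have h2m := OddDecompAux.edge_count (2 * d) hreg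
    have hprod : (2 * d) * Fintype.card V = 2 * (d * Fintype.card V) := by ring
    have hEc : G.edgeSet.ncard = d * Fintype.card V := by omega
    rw [hEc, Nat.mul_mod]
    have hn : Fintype.card V % 2 = 1 := Nat.odd_iff.mp hodd
    rw [hn]
    omega
  exact OddDecompAux.merge hconn k hk1 Qall.card Qall rfl hconn' heven' hne' hdisj'
    hcover' (le_trans hkd hcount) hparity
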